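/- Every minimal blocking set (t = 1 case: every line meets S and through every point of S there is a tangent line) in a finite projective plane of order n has size at most n√n + 1. -/

import Mathlib

open Configuration Finset


private lemma bruen_thas_aux (n K τ N A B : ℝ) (hK1 : 1 ≤ K) (hτK : K ≤ τ)
    (hN1 : 1 ≤ N) (hn0 : 0 ≤ n) (hKN : K + N = n ^ 2 + n + 1)
    (hA : τ ^ 2 ≤ K * A) (hB : (n * τ) ^ 2 ≤ N * B) (hAB : A + B = τ * n + τ * τ) :
    K ≤ n * Real.sqrt n + 1 := by
  have hτ1 : (0:ℝ) < τ := lt_of_lt_of_le one_pos (le_trans hK1 hτK)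
  have hKpos : (0:ℝ) < K := lt_of_lt_of_le one_pos hK1
  have hNpos : (0:ℝ) < N := lt_of_lt_of_le one_pos hN1
  have hcomb : τ ^ 2 * N + n ^ 2 * τ ^ 2 * K ≤ K * N * (τ * n + τ * τ) := by
    have h1 : τ ^ 2 * N ≤ K * N * A := by
      calc τ ^ 2 * N ≤ (K * A) * N := mul_le_mul_of_nonneg_right hA (le_of_lt hNpos)
      _ = K * N * A := by ring
    have h2 : n ^ 2 * τ ^ 2 * K ≤ K * N * B := by
      calc n ^ 2 * τ ^ 2 * K = (n * τ) ^ 2 * K := by ring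
      _ ≤ (N * B) * K := mul_le_mul_of_nonneg_right hB (le_of_lt hKpos)
      _ = K * N * B := by ring
    calc τ ^ 2 * N + n ^ 2 * τ ^ 2 * K ≤ K * N * A + K * N * B := add_le_add h1 h2
    _ = K * N * (A + B) := by ring
    _ = K * N * (τ * n + τ * τ) := by rw [hAB]
  have key1 : τ * N + n ^ 2 * τ * K ≤ K * N * (n + τ) := by
    apply le_of_mul_le_mul_right _ hτ1
    nlinarith [hcomb]
  have key2 : n ^ 2 * K ≤ N * (n + K - 1) := by
    apply le_of_mul_le_mul_right _ hτ1
    nlinarith [key1, mul_nonneg (mul_nonneg (le_of_lt hNpos) hn0) (sub_nonneg.mpr hτK)]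
  have key3 : (K - 1) ^ 2 ≤ n ^ 3 := by nlinarith [key2, hKN]
  have h5 : Real.sqrt (n ^ 3) = n * Real.sqrt n := by
    rw [show (n ^ 3) = n ^ 2 * n by ring, Real.sqrt_mul (sq_nonneg _), Real.sqrt_sq hn0]
  have h4 : K - 1 ≤ n * Real.sqrt n := by
    calc K - 1 = Real.sqrt ((K - 1) ^ 2) := (Real.sqrt_sq (by linarith)).symm
    _ ≤ Real.sqrt (n ^ 3) := Real.sqrt_le_sqrt key3
    _ = n * Real.sqrt n := h5
  linarith

theorem bruen_thas_minimal_blocking_set (P L : Type*) [Membership P L]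
    [Fintype P] [Fintype L] [ProjectivePlane P L]
    (n : ℕ) (hn : ProjectivePlane.order P L = n)
    (S : Finset P)
    (hblock : ∀ ℓ : L, ∃ p ∈ S, p ∈ ℓ)
    (hmin : ∀ p ∈ S, ∃ ℓ : L, p ∈ ℓ ∧ Nat.card {q : P // q ∈ S ∧ q ∈ ℓ} = 1) :
    (S.card : ℝ) ≤ n * Real.sqrt n + 1 := by
  classical
  have hn2 : 2 ≤ n := hn ▸ ProjectivePlane.one_lt_order P L
  -- basic counting facts
  have hpts : ∀ ℓ : L, (univ.filter (fun p : P => p ∈ ℓ)).card = n + 1 := by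
    intro ℓ
    have h := ProjectivePlane.pointCount_eq P ℓ
    rwa [pointCount, Nat.card_eq_fintype_card, Fintype.card_subtype, hn] at h
  have hcardP : Fintype.card P = n ^ 2 + n + 1 := by
    rw [ProjectivePlane.card_points P L, hn]
  have huline : ∀ p q : P, p ≠ q →
      (univ.filter (fun ℓ : L => p ∈ ℓ ∧ q ∈ ℓ)).card = 1 := by
    intro p q hpq
    obtain ⟨ℓ, hℓ, hu⟩ := HasLines.existsUnique_line P L p q hpq
    rw [Finset.card_eq_one]
    refine ⟨ℓ, ?_⟩
    ext m
    simp only [mem_filter, mem_univ, true_and, mem_singleton]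
    exact ⟨fun h => hu m h, fun h => h ▸ hℓ⟩
  have hupoint : ∀ ℓ m : L, ℓ ≠ m →
      (univ.filter (fun x : P => x ∈ ℓ ∧ x ∈ m)).card = 1 := by
    intro ℓ m hlm
    obtain ⟨x, hx, hu⟩ := HasPoints.existsUnique_point P L ℓ m hlm
    rw [Finset.card_eq_one]
    refine ⟨x, ?_⟩
    ext y
    simp only [mem_filter, mem_univ, true_and, mem_singleton]
    exact ⟨fun h => hu y h, fun h => h ▸ hx⟩
  -- the set of tangent lines
  set T : Finset L := univ.filter (fun ℓ : L => (S.filter (fun p => p ∈ ℓ)).card = 1) with hT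
  set c : P → ℕ := fun x => (T.filter (fun ℓ => x ∈ ℓ)).card with hc
  -- generic double counting
  have hswap : ∀ (A : Finset L) (B : Finset P),
      ∑ ℓ ∈ A, (B.filter (fun p => p ∈ ℓ)).card
        = ∑ p ∈ B, (A.filter (fun ℓ => p ∈ ℓ)).card := by
    intro A B
    simp_rw [Finset.card_filter]
    exact Finset.sum_comm
  -- sum of c over S
  have hB : ∑ p ∈ S, c p = T.card := by
    have := (hswap T S).symm
    simp only [hc]
    rw [this]
    rw [Finset.sum_congr rfl (fun ℓ hℓ => (Finset.mem_filter.mp hℓ).2)]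
    simp
    rfl
  -- sum of c over everything
  have hC : ∑ x : P, c x = (n + 1) * T.card := by
    simp only [hc]
    rw [← hswap T univ]
    rw [Finset.sum_congr rfl (fun ℓ _ => hpts ℓ), Finset.sum_const, smul_eq_mul,
      mul_comm]
  -- sum of squares of c
  have hsq : ∑ x : P, c x * c x = T.card * n + T.card * T.card := by
    have e1 : ∀ x : P, c x * c x
        = ∑ ℓ ∈ T, ∑ m ∈ T, (if x ∈ ℓ ∧ x ∈ m then 1 else 0) := by
      intro x
      simp only [hc]
      rw [Finset.card_filter, Finset.sum_mul_sum]
      refine Finset.sum_congr rfl fun ℓ _ => Finset.sum_congr rfl fun m _ => ?_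
      by_cases h1 : x ∈ ℓ <;> by_cases h2 : x ∈ m <;> simp [h1, h2]
    simp_rw [e1]
    rw [Finset.sum_comm]
    have e3 : ∀ ℓ ∈ T, (∑ x : P, ∑ m ∈ T, (if x ∈ ℓ ∧ x ∈ m then 1 else 0))
        = n + T.card := by
      intro ℓ hℓ
      rw [Finset.sum_comm]
      have e2 : ∀ m ∈ T, (∑ x : P, (if x ∈ ℓ ∧ x ∈ m then (1:ℕ) else 0))
          = if m = ℓ then n + 1 else 1 := by
        intro m _
        rw [← Finset.card_filter]
        by_cases h : m = ℓ
        · subst h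
          rw [if_pos rfl]
          simp only [and_self]
          exact hpts m
        · rw [if_neg h, hupoint ℓ m (Ne.symm h)]
      rw [Finset.sum_congr rfl e2]
      have : ∀ m ∈ T, (if m = ℓ then n + 1 else 1) = (if m = ℓ then n else 0) + 1 := by
        intro m _
        by_cases h : m = ℓ <;> simp [h]
      rw [Finset.sum_congr rfl this, Finset.sum_add_distrib, Finset.sum_ite_eq' T ℓ fun _ => n,
        if_pos hℓ, Finset.sum_const, smul_eq_mul, mul_one]
    rw [Finset.sum_congr rfl e3, Finset.sum_const, smul_eq_mul, mul_add]
  -- every point of S is on a tangent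
  have hE : ∀ p ∈ S, 1 ≤ c p := by
    intro p hp
    obtain ⟨ℓ, hpℓ, h1⟩ := hmin p hp
    have hTℓ : ℓ ∈ T := by
      rw [hT, Finset.mem_filter]
      refine ⟨Finset.mem_univ _, ?_⟩
      rw [← h1, Nat.card_eq_fintype_card, Fintype.card_subtype]
      congr 1
      ext q
      simp [Finset.mem_filter]
    have : ℓ ∈ T.filter (fun m => p ∈ m) := Finset.mem_filter.mpr ⟨hTℓ, hpℓ⟩
    exact Finset.card_pos.mpr ⟨ℓ, this⟩
  -- S is nonempty
  have hk1 : 1 ≤ S.card := by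
    obtain ⟨p₁, p₂, p₃, l₁, l₂, l₃, -⟩ := ProjectivePlane.exists_config (P := P) (L := L)
    obtain ⟨p, hp, -⟩ := hblock l₁
    exact Finset.card_pos.mpr ⟨p, hp⟩
  -- there are at least |S| tangents
  have hτk : S.card ≤ T.card := by
    calc S.card = ∑ _p ∈ S, 1 := by simp
    _ ≤ ∑ p ∈ S, c p := Finset.sum_le_sum hE
    _ = T.card := hB
  -- the complement of S is nonempty
  have hNpos : 1 ≤ Sᶜ.card := by
    by_contra h
    push_neg at h
    have hSc : Sᶜ.card = 0 := by omega
    have hSu : S = univ := (Finset.compl_eq_empty_iff S).mp (Finset.card_eq_zero.mp hSc)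
    obtain ⟨ℓ, hℓ⟩ := Finset.card_pos.mp (lt_of_lt_of_le hk1 hτk)
    have h1 := (Finset.mem_filter.mp hℓ).2
    rw [hSu] at h1
    rw [hpts ℓ] at h1
    omega
  have hsplit : S.card + Sᶜ.card = n ^ 2 + n + 1 := by
    rw [Finset.card_add_card_compl, hcardP]
  have hH : ∑ q ∈ Sᶜ, c q = n * T.card := by
    have h0 := Finset.sum_compl_add_sum S c
    rw [hB, hC] at h0
    have h1 : (n + 1) * T.card = n * T.card + T.card := by ring
    linarith
  have hsqsplit : ∑ p ∈ S, c p * c p + ∑ q ∈ Sᶜ, c q * c q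
      = T.card * n + T.card * T.card := by
    have h0 := Finset.sum_compl_add_sum S (fun x => c x * c x)
    linarith [hsq]
  -- pass to the reals
  have hsqr : ∑ p ∈ S, (c p : ℝ) ^ 2 + ∑ q ∈ Sᶜ, (c q : ℝ) ^ 2
      = (T.card : ℝ) * n + (T.card : ℝ) * (T.card : ℝ) := by
    have h2 : ((∑ p ∈ S, c p * c p + ∑ q ∈ Sᶜ, c q * c q : ℕ) : ℝ)
        = ((T.card * n + T.card * T.card : ℕ) : ℝ) :=
      congrArg (fun m : ℕ => (m : ℝ)) hsqsplit
    push_cast at h2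
    simpa [sq] using h2
  have hBr : ∑ p ∈ S, (c p : ℝ) = (T.card : ℝ) := by exact_mod_cast hB
  have hHr : ∑ q ∈ Sᶜ, (c q : ℝ) = (n : ℝ) * (T.card : ℝ) := by exact_mod_cast hH
  have cauchy1 : ((T.card : ℝ)) ^ 2 ≤ (S.card : ℝ) * ∑ p ∈ S, (c p : ℝ) ^ 2 := by
    have h := sq_sum_le_card_mul_sum_sq (s := S) (f := fun p => (c p : ℝ))
    rwa [hBr] at h
  have cauchy2 : ((n : ℝ) * (T.card : ℝ)) ^ 2 ≤ (Sᶜ.card : ℝ) * ∑ q ∈ Sᶜ, (c q : ℝ) ^ 2 := by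
    have h := sq_sum_le_card_mul_sum_sq (s := Sᶜ) (f := fun q => (c q : ℝ))
    rwa [hHr] at h
  exact bruen_thas_aux (n : ℝ) (S.card : ℝ) (T.card : ℝ) (Sᶜ.card : ℝ)
    (∑ p ∈ S, (c p : ℝ) ^ 2) (∑ q ∈ Sᶜ, (c q : ℝ) ^ 2)
    (by exact_mod_cast hk1) (by exact_mod_cast hτk) (by exact_mod_cast hNpos)
    (Nat.cast_nonneg n) (by exact_mod_cast hsplit) cauchy1 cauchy2 hsqr
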